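/- arXiv:1412.8721 — 2 statements merged into one kernel-verified Lean document; each statement's English description precedes it below -/
import Mathlib

section
/- For 0 ≤ k ≤ n and r ≥ s ≥ 0, C(n,k) · ∏_{i=0}^{n−k−1}(2r − 2s + i) = Σ_{j=k}^{n} (−1)^{j−k} · L_r(n,j) · L_s(j,k), where L_r denotes the r-Lah numbers (as integers). -/
open Finset

/-- The r-Lah numbers `L_r(n,k)` as integers. -/
def rLah (r : ℕ) : ℕ → ℕ → ℤ
  | 0, 0 => 1
  | 0, _ + 1 => 0
  | n + 1, 0 => ((n : ℤ) + 2 * r) * rLah r n 0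
  | n + 1, k + 1 => rLah r n k + ((n : ℤ) + (k + 1) + 2 * r) * rLah r n (k + 1)

/-- The unsigned r-Stirling numbers of the first kind `c_r(n,k)` as integers. -/
def rStirling1 (r : ℕ) : ℕ → ℕ → ℤ
  | 0, 0 => 1
  | 0, _ + 1 => 0
  | n + 1, 0 => ((n : ℤ) + r) * rStirling1 r n 0
  | n + 1, k + 1 => rStirling1 r n k + ((n : ℤ) + r) * rStirling1 r n (k + 1)

/-- The r-Stirling numbers of the second kind `S_r(n,k)` as integers. -/
def rStirling2 (r : ℕ) : ℕ → ℕ → ℤ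
  | 0, 0 => 1
  | 0, _ + 1 => 0
  | n + 1, 0 => (r : ℤ) * rStirling2 r n 0
  | n + 1, k + 1 => rStirling2 r n k + ((k : ℤ) + 1 + r) * rStirling2 r n (k + 1)

lemma rLah_zero_zero (r : ℕ) : rLah r 0 0 = 1 := rfl
lemma rLah_succ_zero (r n : ℕ) : rLah r (n+1) 0 = ((n : ℤ) + 2 * r) * rLah r n 0 := rfl
lemma rLah_succ_succ (r n k : ℕ) :
    rLah r (n+1) (k+1) = rLah r n k + ((n : ℤ) + (k + 1) + 2 * r) * rLah r n (k + 1) := rfl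

lemma rLah_eq_zero (r : ℕ) : ∀ n k, n < k → rLah r n k = 0 := by
  intro n
  induction n with
  | zero => intro k hk; match k, hk with | k+1, _ => rfl
  | succ n ih =>
    intro k hk
    match k, hk with
    | k+1, hk =>
      rw [rLah_succ_succ, ih k (by omega), ih (k+1) (by omega)]; ring

/-- `T r s n k = ∑ i, (-1)^i L_r(n,k+i) L_s(k+i,k)` -/
def T (r s n k : ℕ) : ℤ :=
  ∑ i ∈ range (n + 1 - k), (-1 : ℤ) ^ i * rLah r n (k + i) * rLah s (k + i) k

lemma T_check : True := trivial

lemma T_succ_zero (r s n : ℕ) :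
    T r s (n+1) 0 = ((n : ℤ) + 2*r - 2*s) * T r s n 0 := by
  unfold T
  simp only [Nat.sub_zero, zero_add]
  rw [Finset.sum_range_succ']
  have tele : ∀ i : ℕ,
      (-1 : ℤ) ^ (i+1) * rLah r (n+1) (i+1) * rLah s (i+1) 0
        = ((n : ℤ) + 2*r - 2*s) * ((-1 : ℤ) ^ i * rLah r n i * rLah s i 0)
          + (((-1 : ℤ) ^ (i+1) * ((n : ℤ) + (i+1) + 2*r) * rLah r n (i+1) * rLah s (i+1) 0)
             - ((-1 : ℤ) ^ i * ((n : ℤ) + i + 2*r) * rLah r n i * rLah s i 0)) := by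
    intro i
    rw [rLah_succ_succ, rLah_succ_zero]
    push_cast
    ring
  rw [Finset.sum_congr rfl (fun i _ => tele i), Finset.sum_add_distrib, ← Finset.mul_sum]
  have e1 := Finset.sum_range_sub
    (f := fun i => (-1 : ℤ) ^ i * ((n : ℤ) + i + 2*r) * rLah r n i * rLah s i 0) (n+1)
  push_cast at e1 ⊢
  rw [e1, rLah_eq_zero r n (n+1) (by omega)]
  simp [rLah_zero_zero]
  rw [rLah_succ_zero]
  ring

lemma T_succ_succ (r s n k : ℕ) (hk : k ≤ n) :
    T r s (n+1) (k+1) = T r s n k + ((n : ℤ) - (k+1) + 2*r - 2*s) * T r s n (k+1) := by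
  unfold T
  have e0 : n + 1 + 1 - (k + 1) = n + 1 - k := by omega
  have e2 : n + 1 - k = (n - k) + 1 := by omega
  have e3 : n + 1 - (k + 1) = n - k := by omega
  rw [e0, e3]
  have tele : ∀ i : ℕ,
      (-1 : ℤ) ^ i * rLah r (n+1) (k+1+i) * rLah s (k+1+i) (k+1)
        = (-1 : ℤ) ^ i * rLah r n (k+i) * rLah s (k+i) k
          + ((n : ℤ) - (k+1) + 2*r - 2*s) * ((-1 : ℤ) ^ i * rLah r n (k+1+i) * rLah s (k+1+i) (k+1))
          + (((-1 : ℤ) ^ i * ((2*k : ℤ) + 1 + i + 2*s) * rLah r n (k+i) * rLah s (k+i) (k+1))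
             - ((-1 : ℤ) ^ (i+1) * ((2*k : ℤ) + 1 + (i+1) + 2*s) * rLah r n (k+(i+1)) * rLah s (k+(i+1)) (k+1))) := by
    intro i
    have h1 : k + 1 + i = (k + i) + 1 := by omega
    have h2 : k + (i + 1) = (k + i) + 1 := by omega
    rw [h1, h2, rLah_succ_succ r n (k+i), rLah_succ_succ s (k+i) k]
    push_cast
    ring
  rw [Finset.sum_congr rfl (fun i _ => tele i), Finset.sum_add_distrib, Finset.sum_add_distrib,
    ← Finset.mul_sum]
  have e1 := Finset.sum_range_sub'
    (f := fun i => (-1 : ℤ) ^ i * ((2*k : ℤ) + 1 + i + 2*s) * rLah r n (k+i) * rLah s (k+i) (k+1)) (n+1-k)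
  push_cast at e1 ⊢
  rw [e1]
  have z1 : rLah s k (k+1) = 0 := rLah_eq_zero s k (k+1) (by omega)
  have hkn : k + (n + 1 - k) = n + 1 := by omega
  have z2 : rLah r n (k + (n + 1 - k)) = 0 := by rw [hkn]; exact rLah_eq_zero r n (n+1) (by omega)
  rw [z2]
  simp only [add_zero, pow_zero, one_mul, zero_mul, mul_zero, z1, sub_zero, zero_sub]
  -- now handle the extra top term of the middle sum
  have hkn2 : k + 1 + (n - k) = n + 1 := by omega
  rw [e2, Finset.sum_range_succ, Finset.sum_range_succ, hkn2,
    rLah_eq_zero r n (n+1) (by omega)]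
  ring

lemma T_eq (r s n : ℕ) : ∀ k, T r s n k =
    (n.choose k : ℤ) * ∏ i ∈ range (n - k), (2 * (r : ℤ) - 2 * s + i) := by
  induction n with
  | zero =>
    intro k
    cases k with
    | zero => simp [T, rLah]
    | succ k => simp [T]
  | succ n ih =>
    intro k
    cases k with
    | zero =>
      rw [T_succ_zero, ih 0]
      simp only [Nat.choose_zero_right, Nat.cast_one, one_mul, Nat.sub_zero,
        Finset.prod_range_succ]
      ring
    | succ k =>
      by_cases hk : k ≤ n
      · rw [T_succ_succ r s n k hk, ih k, ih (k+1)]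
        rw [Nat.choose_succ_succ n k]
        have e3 : n + 1 - (k + 1) = n - k := by omega
        rw [e3]
        rcases Nat.lt_or_ge k n with h | h
        · have e4 : n - k = (n - (k+1)) + 1 := by omega
          have e5 : ((n : ℤ) - (k + 1)) = ((n - (k+1) : ℕ) : ℤ) := by push_cast; omega
          rw [e4, Finset.prod_range_succ, e5]
          push_cast
          ring
        · have hkn : k = n := by omega
          subst hkn
          simp [Nat.choose_eq_zero_of_lt]
      · have h1 : n + 1 + 1 - (k + 1) = 0 := by omega
        have h2 : (n+1).choose (k+1) = 0 := Nat.choose_eq_zero_of_lt (by omega)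
        simp [T, h1, h2]

theorem rLah_orthogonality_rising (n k r s : ℕ) (hkn : k ≤ n) (hsr : s ≤ r) :
    (n.choose k : ℤ) * ∏ i ∈ range (n - k), (2 * (r : ℤ) - 2 * s + i) =
      ∑ j ∈ Icc k n, (-1) ^ (j - k) * rLah r n j * rLah s j k := by
  rw [← Finset.Ico_add_one_right_eq_Icc, Finset.sum_Ico_eq_sum_range]
  simp only [Nat.add_sub_cancel_left]
  exact (T_eq r s n k).symm
end

section
/- For 0 ≤ k ≤ n and 2s ≥ r ≥ 0, the r-Stirling numbers of the second kind satisfy S_{2s−r}(n,k) = Σ_{j=k}^{n} (−1)^{n−j} · S_r(n,j) · L_s(j,k). -/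
open Finset

lemma rLah_of_lt (s : ℕ) : ∀ n k, n < k → rLah s n k = 0 := by
  intro n
  induction n with
  | zero => intro k hk; match k, hk with | k+1, _ => rfl
  | succ n ih =>
    intro k hk
    match k, hk with
    | k+1, hk =>
      have h1 : n < k := by omega
      have h2 : n < k+1 := by omega
      simp [rLah, ih _ h1, ih _ h2]

lemma rStirling2_of_lt (r : ℕ) : ∀ n k, n < k → rStirling2 r n k = 0 := by
  intro n
  induction n with
  | zero => intro k hk; match k, hk with | k+1, _ => rfl
  | succ n ih =>
    intro k hk
    match k, hk with
    | k+1, hk =>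
      have h1 : n < k := by omega
      have h2 : n < k+1 := by omega
      simp [rStirling2, ih _ h1, ih _ h2]

lemma key (r s : ℕ) (hr : r ≤ 2 * s) : ∀ n k,
    ∑ j ∈ range (n+1), (-1:ℤ)^j * rStirling2 r n j * rLah s j k
      = (-1)^n * rStirling2 (2*s - r) n k := by
  intro n
  induction n with
  | zero =>
    intro k
    cases k <;> simp [rStirling2, rLah]
  | succ n ih =>
    intro k
    have hc : ((2*s - r : ℕ) : ℤ) = 2*(s:ℤ) - r := by omega
    have hsq : ∀ m : ℕ, (-1:ℤ)^m * (-1)^m = 1 := by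
      intro m; rw [← pow_add]; exact Even.neg_one_pow ⟨m, rfl⟩
    have hS : ∀ m, rStirling2 (2*s - r) n m
        = (-1:ℤ)^n * ∑ j ∈ range (n+1), (-1:ℤ)^j * rStirling2 r n j * rLah s j m := by
      intro m
      rw [ih m, ← mul_assoc, hsq, one_mul]
    -- shift the outer sum
    rw [Finset.sum_range_succ']
    -- split each shifted term using the Stirling recurrence
    have h1 : ∑ i ∈ range (n+1),
        (-1:ℤ)^(i+1) * rStirling2 r (n+1) (i+1) * rLah s (i+1) k
        = ∑ i ∈ range (n+1), ((-1:ℤ)^(i+1) * rStirling2 r n i * rLah s (i+1) k)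
          + ∑ i ∈ range (n+1),
            ((-1:ℤ)^(i+1) * (((i:ℤ)+1+r) * rStirling2 r n (i+1)) * rLah s (i+1) k) := by
      rw [← sum_add_distrib]
      refine sum_congr rfl fun i _ => ?_
      show (-1:ℤ)^(i+1) * rStirling2 r (n+1) (i+1) * rLah s (i+1) k = _
      simp only [rStirling2]
      ring
    -- the second sum is a shift
    have h2 : ∑ i ∈ range (n+1),
        ((-1:ℤ)^(i+1) * (((i:ℤ)+1+r) * rStirling2 r n (i+1)) * rLah s (i+1) k)
        = (∑ j ∈ range (n+1), (-1:ℤ)^j * (((j:ℤ)+r) * rStirling2 r n j) * rLah s j k)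
          - (-1:ℤ)^0 * (((0:ℕ):ℤ)+r) * rStirling2 r n 0 * rLah s 0 k := by
      set g : ℕ → ℤ := fun j => (-1:ℤ)^j * (((j:ℤ)+r) * rStirling2 r n j) * rLah s j k with hg
      have e1 : ∀ i : ℕ, (-1:ℤ)^(i+1) * (((i:ℤ)+1+r) * rStirling2 r n (i+1)) * rLah s (i+1) k
          = g (i+1) := by
        intro i; simp only [hg]; push_cast; ring
      rw [sum_congr rfl fun i _ => e1 i]
      have h := Finset.sum_range_succ' g (n+1)
      rw [Finset.sum_range_succ] at h
      have hgz : g (n+1) = 0 := by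
        simp [hg, rStirling2_of_lt r n (n+1) (by omega)]
      rw [hgz] at h
      have hg0 : g 0 = (-1:ℤ)^0 * (((0:ℕ):ℤ)+r) * rStirling2 r n 0 * rLah s 0 k := by
        simp [hg]
      rw [← hg0]
      linarith
    have h3 : (-1:ℤ)^0 * rStirling2 r (n+1) 0 * rLah s 0 k
        = (-1:ℤ)^0 * (((0:ℕ):ℤ)+r) * rStirling2 r n 0 * rLah s 0 k := by
      simp [rStirling2]
    rw [h1, h2, h3]
    have h4 : ∀ T : ℤ,
        ∑ i ∈ range (n+1), ((-1:ℤ)^(i+1) * rStirling2 r n i * rLah s (i+1) k)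
          + ((∑ j ∈ range (n+1), (-1:ℤ)^j * (((j:ℤ)+r) * rStirling2 r n j) * rLah s j k) - T) + T
        = ∑ j ∈ range (n+1), ((-1:ℤ)^(j+1) * rStirling2 r n j * rLah s (j+1) k
            + (-1:ℤ)^j * (((j:ℤ)+r) * rStirling2 r n j) * rLah s j k) := by
      intro T
      rw [sum_add_distrib]
      ring
    rw [h4]
    -- now finish by cases on k
    cases k with
    | zero =>
      simp only [rStirling2]
      rw [hS 0, mul_sum]
      have hrec : ∀ j ∈ range (n+1),
          (-1:ℤ)^(j+1) * rStirling2 r n j * rLah s (j+1) 0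
            + (-1:ℤ)^j * (((j:ℤ)+r) * rStirling2 r n j) * rLah s j 0
          = (-1:ℤ)^(n+1) * (((2*s - r : ℕ):ℤ) * ((-1:ℤ)^n * ((-1:ℤ)^j * rStirling2 r n j * rLah s j 0))) := by
        intro j _
        simp only [rLah]
        rw [hc]
        have := hsq n
        push_cast
        linear_combination ((2*(s:ℤ)-r) * ((-1:ℤ)^j * rStirling2 r n j * rLah s j 0)) * this
      rw [sum_congr rfl hrec]
      rw [← mul_sum, ← mul_sum]
    | succ m =>
      simp only [rStirling2]
      rw [hS m, hS (m+1), mul_sum, mul_sum]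
      have hrec : ∀ j ∈ range (n+1),
          (-1:ℤ)^(j+1) * rStirling2 r n j * rLah s (j+1) (m+1)
            + (-1:ℤ)^j * (((j:ℤ)+r) * rStirling2 r n j) * rLah s j (m+1)
          = (-1:ℤ)^(n+1) * (((-1:ℤ)^n * ((-1:ℤ)^j * rStirling2 r n j * rLah s j m))
              + ((m:ℤ) + 1 + ((2*s - r : ℕ):ℤ))
                * ((-1:ℤ)^n * ((-1:ℤ)^j * rStirling2 r n j * rLah s j (m+1)))) := by
        intro j _
        simp only [rLah]
        rw [hc]
        have := hsq n
        push_cast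
        linear_combination (((-1:ℤ)^j * rStirling2 r n j * rLah s j m)
          + ((m:ℤ)+1+(2*(s:ℤ)-r)) * ((-1:ℤ)^j * rStirling2 r n j * rLah s j (m+1))) * this
      rw [sum_congr rfl hrec]
      simp only [Finset.sum_add_distrib, ← Finset.mul_sum]

theorem rStirling2_eq_alt_sum_rLah (n k r s : ℕ) (hkn : k ≤ n) (hr : r ≤ 2 * s) :
    rStirling2 (2 * s - r) n k =
      ∑ j ∈ Icc k n, (-1) ^ (n - j) * rStirling2 r n j * rLah s j k := by
  have hsq : ∀ m : ℕ, (-1:ℤ)^m * (-1)^m = 1 := by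
    intro m; rw [← pow_add]; exact Even.neg_one_pow ⟨m, rfl⟩
  have h1 : ∑ j ∈ Icc k n, (-1:ℤ)^(n-j) * rStirling2 r n j * rLah s j k
      = ∑ j ∈ range (n+1), (-1:ℤ)^(n-j) * rStirling2 r n j * rLah s j k := by
    apply Finset.sum_subset
    · intro j hj
      simp only [mem_Icc] at hj
      simp only [mem_range]
      omega
    · intro j hj hnot
      simp only [mem_range] at hj
      simp only [mem_Icc] at hnot
      have hjk : j < k := by omega
      simp [rLah_of_lt s j k hjk]
  have h2 : ∑ j ∈ range (n+1), (-1:ℤ)^(n-j) * rStirling2 r n j * rLah s j k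
      = (-1:ℤ)^n * ∑ j ∈ range (n+1), (-1:ℤ)^j * rStirling2 r n j * rLah s j k := by
    rw [Finset.mul_sum]
    refine sum_congr rfl fun j hj => ?_
    have hjn : j ≤ n := by simp only [mem_range] at hj; omega
    have e : (-1:ℤ)^n * (-1:ℤ)^j = (-1:ℤ)^(n-j) := by
      rw [← pow_add]
      have hnj : n + j = (n - j) + 2*j := by omega
      rw [hnj, pow_add, pow_mul]
      norm_num
    rw [← e]
    ring
  rw [h1, h2, key r s hr n k, ← mul_assoc, hsq n, one_mul]
end
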